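/- arXiv:1402.3044 — 2 statements merged into one kernel-verified Lean document; each statement's English description precedes it below -/
import Mathlib

section
/- Let α = (α_1, …, α_K) be a nonincreasing OWA vector of nonnegative reals and assume |A| = m ≥ K ≥ 1. Let W_0 = ∅ and, for t = 1, …, K, let W_t = W_{t−1} ∪ {a_t}, where a_t is any element of A ∖ W_{t−1} maximizing u^α(W_{t−1} ∪ {a}) over a ∈ A ∖ W_{t−1}. Then u^α(W_K) ≥ (1 − (1 − 1/K)^K) · max_{S ⊆ A, |S| = K} u^α(S) ≥ (1 − 1/e) · max_{S ⊆ A, |S| = K} u^α(S). -/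
open Finset

/-- The OWA-aggregated total utility of a set `W` of items: for each agent `i` in `N`,
the intrinsic utilities of the items of `W` are sorted in nonincreasing order
`x_0 ≥ x_1 ≥ …` and the agent contributes `∑_{j < K} α j * x_j`
(positions beyond `|W|` contribute `0`).  The OWA vector is `0`-indexed:
`α j` is entry `α_{j+1}` of the paper. -/
noncomputable def owaUtil {I A : Type*} [DecidableEq A]
    (N : Finset I) (u : I → A → ℝ) (K : ℕ) (α : ℕ → ℝ) (W : Finset A) : ℝ :=
  ∑ i ∈ N, ∑ j ∈ Finset.range K,
    α j * (((W.1.map (u i)).sort (· ≤ ·)).reverse.getD j 0)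

namespace OwaAux

open List

/-! ### List-level lemmas about descending sorted lists -/

/-- sum of the first `p` entries (0-padded). -/
noncomputable def SY (p : ℕ) (l : List ℝ) : ℝ := ∑ k ∈ Finset.range p, l.getD k 0

lemma SY_succ (p : ℕ) (l : List ℝ) : SY (p+1) l = SY p l + l.getD p 0 :=
  Finset.sum_range_succ _ _

lemma SY_cons (p : ℕ) (a : ℝ) (l : List ℝ) : SY (p+1) (a :: l) = a + SY p l := by
  rw [SY, Finset.sum_range_succ']
  simp [SY]
  ring

lemma getD_nonneg {l : List ℝ} (h : ∀ x ∈ l, 0 ≤ x) (j : ℕ) : 0 ≤ l.getD j 0 := by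
  induction l generalizing j with
  | nil => simp
  | cons a l ih =>
    cases j with
    | zero => exact h a List.mem_cons_self
    | succ j => exact ih (fun x hx => h x (mem_cons_of_mem a hx)) j

lemma getD_le_of_forall {l : List ℝ} {c : ℝ} (h : ∀ x ∈ l, x ≤ c) (hc : 0 ≤ c) (j : ℕ) :
    l.getD j 0 ≤ c := by
  induction l generalizing j with
  | nil => simpa using hc
  | cons a l ih =>
    cases j with
    | zero => exact h a List.mem_cons_self
    | succ j => exact ih (fun x hx => h x (mem_cons_of_mem a hx)) j

lemma getD_antitone {l : List ℝ} (hs : l.Pairwise (· ≥ ·)) (h0 : ∀ x ∈ l, 0 ≤ x) (j : ℕ) :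
    l.getD (j+1) 0 ≤ l.getD j 0 := by
  induction l generalizing j with
  | nil => simp
  | cons a l ih =>
    rw [List.pairwise_cons] at hs
    cases j with
    | zero =>
      show l.getD 0 0 ≤ a
      exact getD_le_of_forall hs.1 (h0 a List.mem_cons_self) 0
    | succ j =>
      exact ih hs.2 (fun x hx => h0 x (mem_cons_of_mem a hx)) j

/-- prepending the largest element raises every position. -/
lemma getD_le_cons {a : ℝ} {l : List ℝ} (hs : (a :: l).Pairwise (· ≥ ·))
    (h0 : ∀ x ∈ a :: l, 0 ≤ x) (j : ℕ) : l.getD j 0 ≤ (a :: l).getD j 0 := by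
  rw [List.pairwise_cons] at hs
  cases j with
  | zero => exact getD_le_of_forall hs.1 (h0 a List.mem_cons_self) 0
  | succ j =>
    show l.getD (j+1) 0 ≤ l.getD j 0
    exact getD_antitone hs.2 (fun x hx => h0 x (mem_cons_of_mem a hx)) j

/-- descending ordered insert. -/
noncomputable def ins (x : ℝ) (l : List ℝ) : List ℝ := List.orderedInsert (· ≥ ·) x l

/-- Key marginal formula for top-`p+1` sums under insertion. -/
lemma SY_ins {x : ℝ} (hx : 0 ≤ x) {l : List ℝ} (hs : l.Pairwise (· ≥ ·)) (p : ℕ) :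
    SY (p+1) (ins x l) = SY (p+1) l + max (x - l.getD p 0) 0 := by
  induction l generalizing p with
  | nil =>
    show SY (p+1) [x] = SY (p+1) [] + max (x - 0) 0
    have h1 : SY (p+1) [x] = x := by
      rw [SY, Finset.sum_range_succ']
      simp
    have h2 : SY (p+1) ([] : List ℝ) = 0 := by simp [SY]
    rw [h1, h2, sub_zero, max_eq_left hx, zero_add]
  | cons a l ih =>
    rw [List.pairwise_cons] at hs
    by_cases hax : x ≥ a
    · have : ins x (a :: l) = x :: a :: l := by
        rw [ins, List.orderedInsert]
        simp [hax]
      rw [this, SY_cons]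
      have hle : (a :: l).getD p 0 ≤ x := by
        refine getD_le_of_forall ?_ hx p
        intro y hy
        rcases List.mem_cons.mp hy with h | h
        · exact h ▸ hax
        · exact le_trans (hs.1 y h) hax
      rw [max_eq_left (by linarith), SY_succ]
      ring
    · have : ins x (a :: l) = a :: ins x l := by
        rw [ins, List.orderedInsert]
        simp only [if_neg hax]
        rfl
      rw [this]
      cases p with
      | zero =>
        rw [SY_cons, SY_cons]
        have : (a :: l).getD 0 0 = a := rfl
        rw [this, SY, SY]
        simp only [Finset.range_zero, Finset.sum_empty]
        have : max (x - a) 0 = 0 := max_eq_right (by push_neg at hax; linarith)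
        rw [this]; ring
      | succ q =>
        rw [SY_cons, ih hs.2 q, SY_cons]
        have : (a :: l).getD (q+1) 0 = l.getD q 0 := rfl
        rw [this]; ring

/-- inserting a nonnegative element raises every position. -/
lemma getD_le_ins {x : ℝ} (hx : 0 ≤ x) {l : List ℝ} (hs : l.Pairwise (· ≥ ·))
    (h0 : ∀ y ∈ l, 0 ≤ y) (j : ℕ) : l.getD j 0 ≤ (ins x l).getD j 0 := by
  induction l generalizing j with
  | nil =>
    show ([] : List ℝ).getD j 0 ≤ [x].getD j 0
    simp only [List.getD_nil]
    exact getD_nonneg (by simpa using hx) j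
  | cons a l ih =>
    rw [List.pairwise_cons] at hs
    by_cases hax : x ≥ a
    · have he : ins x (a :: l) = x :: a :: l := by
        rw [ins, List.orderedInsert]; simp [hax]
      rw [he]
      cases j with
      | zero => exact hax
      | succ j =>
        show l.getD j 0 ≤ (a :: l).getD j 0
        exact getD_le_cons (List.pairwise_cons.mpr hs) h0 j
    · have he : ins x (a :: l) = a :: ins x l := by
        rw [ins, List.orderedInsert]
        simp only [if_neg hax]
        rfl
      rw [he]
      cases j with
      | zero => exact le_refl a
      | succ j => exact ih hs.2 (fun y hy => h0 y (mem_cons_of_mem a hy)) j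

/-! ### Multiset level -/

noncomputable def ds (s : Multiset ℝ) : List ℝ := ((s.sort (· ≤ ·)).reverse : List ℝ)

/-- the `j`-th largest element of `s` (0-padded). -/
noncomputable def dy (j : ℕ) (s : Multiset ℝ) : ℝ := (ds s).getD j 0

lemma ds_sorted (s : Multiset ℝ) : (ds s).Pairwise (· ≥ ·) := by
  have := s.pairwise_sort (· ≤ ·)
  rw [ds, List.pairwise_reverse]
  exact this

lemma ds_coe (s : Multiset ℝ) : ((ds s : List ℝ) : Multiset ℝ) = s := by
  rw [ds, Multiset.coe_reverse, Multiset.sort_eq]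

lemma ds_cons (x : ℝ) (s : Multiset ℝ) : ds (x ::ₘ s) = ins x (ds s) := by
  refine List.Perm.eq_of_pairwise' (ds_sorted _) ((ds_sorted s).orderedInsert x _) ?_
  refine Multiset.coe_eq_coe.mp ?_
  rw [ds_coe]
  have h2 : ((ins x (ds s) : List ℝ) : Multiset ℝ) = ((x :: ds s : List ℝ) : Multiset ℝ) :=
    Multiset.coe_eq_coe.mpr (List.perm_orderedInsert _ _ _)
  rw [h2]
  show x ::ₘ s = x ::ₘ ((ds s : List ℝ) : Multiset ℝ)
  rw [ds_coe]

lemma ds_mem {s : Multiset ℝ} {x : ℝ} : x ∈ ds s ↔ x ∈ s := by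
  rw [← Multiset.mem_coe, ds_coe]

lemma dy_nonneg {s : Multiset ℝ} (h : ∀ x ∈ s, 0 ≤ x) (j : ℕ) : 0 ≤ dy j s :=
  getD_nonneg (fun x hx => h x (ds_mem.mp hx)) j

lemma dy_cons_le {x : ℝ} (hx : 0 ≤ x) {s : Multiset ℝ} (h : ∀ y ∈ s, 0 ≤ y) (j : ℕ) :
    dy j s ≤ dy j (x ::ₘ s) := by
  rw [dy, dy, ds_cons]
  exact getD_le_ins hx (ds_sorted s) (fun y hy => h y (ds_mem.mp hy)) j

lemma dy_add_le (j : ℕ) (s : Multiset ℝ) :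
    ∀ d : Multiset ℝ, (∀ x ∈ s + d, 0 ≤ x) → dy j s ≤ dy j (s + d) := by
  intro d
  induction d using Multiset.induction_on with
  | empty => simp
  | cons x d ih =>
    intro h
    have hrw : s + x ::ₘ d = x ::ₘ (s + d) := by
      rw [← Multiset.singleton_add, ← Multiset.singleton_add, ← add_assoc,
        add_comm s {x}, add_assoc]
    rw [hrw]
    have h' : ∀ y ∈ x ::ₘ (s + d), 0 ≤ y := by
      intro y hy; apply h; rw [hrw]; exact hy
    have hx : 0 ≤ x := h' x (Multiset.mem_cons_self x _)
    calc dy j s ≤ dy j (s + d) := ih (fun y hy => h' y (Multiset.mem_cons_of_mem hy))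
      _ ≤ dy j (x ::ₘ (s + d)) :=
        dy_cons_le hx (fun y hy => h' y (Multiset.mem_cons_of_mem hy)) j

lemma dy_mono {s t : Multiset ℝ} (hst : s ≤ t) (h : ∀ x ∈ t, 0 ≤ x) (j : ℕ) :
    dy j s ≤ dy j t := by
  obtain ⟨d, rfl⟩ := Multiset.le_iff_exists_add.mp hst
  exact dy_add_le j s d h

/-- Abel-summation identity. -/
lemma abel_id (β M : ℕ → ℝ) (K : ℕ) :
    ∑ j ∈ Finset.range K, β j * (M (j+1) - M j)
      = ∑ j ∈ Finset.range K, (β j - β (j+1)) * M (j+1) + β K * M K - β 0 * M 0 := by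
  induction K with
  | zero => simp
  | succ K ih =>
    rw [Finset.sum_range_succ, Finset.sum_range_succ, ih]
    ring

/-- Marginal identity for the OWA sum of a single agent, for a weight sequence `β`
vanishing at `K`. -/
lemma owa_marg (K : ℕ) (β : ℕ → ℝ) (hβK : β K = 0) {x : ℝ} (hx : 0 ≤ x) (s : Multiset ℝ) :
    ∑ j ∈ Finset.range K, β j * dy j (x ::ₘ s)
      = ∑ j ∈ Finset.range K, β j * dy j s
        + ∑ j ∈ Finset.range K, (β j - β (j+1)) * max (x - dy j s) 0 := by
  set M : ℕ → ℝ := fun p => SY p (ds (x ::ₘ s)) - SY p (ds s) with hM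
  have hM0 : M 0 = 0 := by simp [hM, SY]
  have hMs : ∀ p, M (p+1) = max (x - dy p s) 0 := by
    intro p
    rw [hM]
    simp only
    rw [ds_cons, SY_ins hx (ds_sorted s) p, dy]
    ring
  have hdy : ∀ j, dy j (x ::ₘ s) = dy j s + (M (j+1) - M j) := by
    intro j
    have e1 : ∀ t : Multiset ℝ, dy j t = SY (j+1) (ds t) - SY j (ds t) := by
      intro t; rw [SY_succ, dy]; ring
    rw [e1, e1, hM]
    ring
  have : ∑ j ∈ Finset.range K, β j * dy j (x ::ₘ s)
      = ∑ j ∈ Finset.range K, β j * dy j s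
        + ∑ j ∈ Finset.range K, β j * (M (j+1) - M j) := by
    rw [← Finset.sum_add_distrib]
    refine Finset.sum_congr rfl fun j _ => ?_
    rw [hdy j]; ring
  rw [this, abel_id β M K, hβK, hM0]
  have : ∑ j ∈ Finset.range K, (β j - β (j+1)) * M (j+1)
      = ∑ j ∈ Finset.range K, (β j - β (j+1)) * max (x - dy j s) 0 :=
    Finset.sum_congr rfl fun j _ => by rw [hMs j]
  rw [this]
  ring

end OwaAux

section OwaProof

open OwaAux

variable {I A : Type*} [DecidableEq A]
variable (N : Finset I) (u : I → A → ℝ) (K : ℕ) (α : ℕ → ℝ)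

/-- truncated OWA weights. -/
noncomputable def owaBeta (K : ℕ) (α : ℕ → ℝ) : ℕ → ℝ := fun j => if j < K then α j else 0

/-- the marginal gain of adding `a` to `W`. -/
noncomputable def owaMarg (a : A) (W : Finset A) : ℝ :=
  ∑ i ∈ N, ∑ j ∈ Finset.range K,
    (owaBeta K α j - owaBeta K α (j+1)) * max (u i a - dy j (W.1.map (u i))) 0

lemma owaUtil_eq (W : Finset A) :
    owaUtil N u K α W = ∑ i ∈ N, ∑ j ∈ Finset.range K, owaBeta K α j * dy j (W.1.map (u i)) := by
  refine Finset.sum_congr rfl fun i _ => Finset.sum_congr rfl fun j hj => ?_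
  rw [Finset.mem_range] at hj
  rw [owaBeta, if_pos hj]
  rfl

variable (hu : ∀ i a, 0 ≤ u i a)

include hu in
lemma owaUtil_insert {a : A} {W : Finset A} (ha : a ∉ W) :
    owaUtil N u K α (insert a W) = owaUtil N u K α W + owaMarg N u K α a W := by
  rw [owaUtil_eq, owaUtil_eq, owaMarg, ← Finset.sum_add_distrib]
  refine Finset.sum_congr rfl fun i _ => ?_
  have hv : (insert a W).1 = a ::ₘ W.1 := Finset.insert_val_of_notMem ha
  rw [hv, Multiset.map_cons]
  exact owa_marg K (owaBeta K α) (by simp [owaBeta]) (hu i a) _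

variable (hα_nonneg : ∀ j, j < K → 0 ≤ α j)
variable (hα_mono : ∀ j k, j ≤ k → k < K → α k ≤ α j)

include hα_nonneg hα_mono in
lemma owaBeta_delta_nonneg {j : ℕ} :
    0 ≤ owaBeta K α j - owaBeta K α (j+1) := by
  simp only [owaBeta]
  by_cases hj : j < K
  · rw [if_pos hj]
    by_cases hj1 : j + 1 < K
    · rw [if_pos hj1]
      have := hα_mono j (j+1) (Nat.le_succ j) hj1
      linarith
    · rw [if_neg hj1]
      have := hα_nonneg j hj
      linarith
  · rw [if_neg hj, if_neg (by omega)]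
    simp

include hα_nonneg hα_mono in
lemma owaMarg_nonneg (a : A) (W : Finset A) : 0 ≤ owaMarg N u K α a W := by
  refine Finset.sum_nonneg fun i _ => Finset.sum_nonneg fun j _ => ?_
  exact mul_nonneg (owaBeta_delta_nonneg K α hα_nonneg hα_mono) (le_max_right _ _)

include hu hα_nonneg hα_mono in
lemma owaMarg_anti (a : A) {W W' : Finset A} (hWW : W ⊆ W') :
    owaMarg N u K α a W' ≤ owaMarg N u K α a W := by
  refine Finset.sum_le_sum fun i _ => Finset.sum_le_sum fun j _ => ?_
  refine mul_le_mul_of_nonneg_left ?_ (owaBeta_delta_nonneg K α hα_nonneg hα_mono)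
  refine max_le_max (sub_le_sub_left ?_ _) le_rfl
  refine dy_mono ?_ ?_ j
  · exact Multiset.map_le_map (Finset.val_le_iff.mpr hWW)
  · intro x hx
    obtain ⟨b, _, rfl⟩ := Multiset.mem_map.mp hx
    exact hu i b

include hu hα_nonneg in
lemma owaUtil_nonneg (W : Finset A) : 0 ≤ owaUtil N u K α W := by
  refine Finset.sum_nonneg fun i _ => Finset.sum_nonneg fun j hj => ?_
  rw [Finset.mem_range] at hj
  refine mul_nonneg (hα_nonneg j hj) (getD_nonneg ?_ j)
  intro x hx
  have : x ∈ W.1.map (u i) := ds_mem.mp hx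
  obtain ⟨b, _, rfl⟩ := Multiset.mem_map.mp this
  exact hu i b

lemma owaUtil_empty : owaUtil N u K α (∅ : Finset A) = 0 := by
  rw [owaUtil]
  refine Finset.sum_eq_zero fun i _ => Finset.sum_eq_zero fun j _ => ?_
  simp

include hu hα_nonneg hα_mono in
lemma owaUtil_union_le (W : Finset A) :
    ∀ D : Finset A, Disjoint D W →
      owaUtil N u K α (W ∪ D) ≤ owaUtil N u K α W + ∑ a ∈ D, owaMarg N u K α a W := by
  intro D
  induction D using Finset.induction_on with
  | empty => simp
  | @insert a D ha ih =>
    intro hdisj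
    rw [Finset.disjoint_insert_left] at hdisj
    have haWD : a ∉ W ∪ D := by
      rw [Finset.mem_union]
      push_neg
      exact ⟨hdisj.1, ha⟩
    rw [Finset.union_insert, owaUtil_insert N u K α hu haWD, Finset.sum_insert ha]
    have h1 := ih hdisj.2
    have h2 : owaMarg N u K α a (W ∪ D) ≤ owaMarg N u K α a W :=
      owaMarg_anti N u K α hu hα_nonneg hα_mono a Finset.subset_union_left
    linarith

include hu hα_nonneg hα_mono in
lemma owaUtil_mono {W V : Finset A} (hWV : W ⊆ V) :
    owaUtil N u K α W ≤ owaUtil N u K α V := by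
  have key : ∀ D : Finset A, owaUtil N u K α W ≤ owaUtil N u K α (W ∪ D) := by
    intro D
    induction D using Finset.induction_on with
    | empty => simpa using le_refl _
    | @insert a D ha ih =>
      rw [Finset.union_insert]
      by_cases haWD : a ∈ W ∪ D
      · rwa [Finset.insert_eq_self.mpr haWD]
      · rw [owaUtil_insert N u K α hu haWD]
        have := owaMarg_nonneg N u K α hα_nonneg hα_mono a (W ∪ D)
        linarith
  have := key V
  rwa [Finset.union_eq_right.mpr hWV] at this

end OwaProof

/-- Correctness of the greedy algorithm for a nonincreasing nonnegative OWA `α`: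
if `W 0 = ∅` and each `W (t+1)` extends `W t` by an item maximizing the marginal
gain of `u^α`, then `u^α(W K) ≥ (1 − (1 − 1/K)^K)·OPT ≥ (1 − 1/e)·OPT`, where
`OPT` is the maximum of `u^α` over size-`K` subsets of `A`. -/
theorem stmt_2 {I A : Type*} [DecidableEq A] [Fintype A]
    (N : Finset I) (u : I → A → ℝ) (hu : ∀ i a, 0 ≤ u i a)
    (K : ℕ) (hK : 1 ≤ K) (hKm : K ≤ Fintype.card A)
    (α : ℕ → ℝ)
    (hα_nonneg : ∀ j, j < K → 0 ≤ α j)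
    (hα_mono : ∀ j k, j ≤ k → k < K → α k ≤ α j)
    (W : ℕ → Finset A) (hW0 : W 0 = ∅)
    (hstep : ∀ t, t < K → ∃ a, a ∉ W t ∧ W (t + 1) = insert a (W t) ∧
      ∀ b, b ∉ W t →
        owaUtil N u K α (insert b (W t)) ≤ owaUtil N u K α (insert a (W t)))
    (hne : ((Finset.univ : Finset A).powersetCard K).Nonempty) :
    (1 - 1 / Real.exp 1) *
        ((Finset.univ : Finset A).powersetCard K).sup' hne (owaUtil N u K α) ≤
      (1 - (1 - 1 / (K : ℝ)) ^ K) *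
        ((Finset.univ : Finset A).powersetCard K).sup' hne (owaUtil N u K α) ∧
    (1 - (1 - 1 / (K : ℝ)) ^ K) *
        ((Finset.univ : Finset A).powersetCard K).sup' hne (owaUtil N u K α) ≤
      owaUtil N u K α (W K) := by
  set F := owaUtil N u K α with hF
  set OPT := ((Finset.univ : Finset A).powersetCard K).sup' hne F with hOPT
  have hK1 : (1 : ℝ) ≤ (K : ℝ) := by exact_mod_cast hK
  have hKpos : (0 : ℝ) < (K : ℝ) := by linarith
  -- OPT is attained
  obtain ⟨S, hSmem, hSval⟩ := Finset.exists_mem_eq_sup' hne F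
  have hScard : S.card = K := (Finset.mem_powersetCard.mp hSmem).2
  have hOPT_nonneg : 0 ≤ OPT := by
    rw [hOPT, hSval]
    exact owaUtil_nonneg N u K α hu hα_nonneg S
  have hq0 : (0:ℝ) ≤ 1 - 1/(K:ℝ) := by
    have : 1/(K:ℝ) ≤ 1 := by
      rw [div_le_one hKpos]; exact hK1
    linarith
  -- greedy recursion
  have hstep' : ∀ t, t < K → OPT - F (W (t+1)) ≤ (1 - 1/(K:ℝ)) * (OPT - F (W t)) := by
    intro t ht
    obtain ⟨a, haW, hWt1, hmax⟩ := hstep t ht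
    have hΔeq : F (W (t+1)) = F (W t) + owaMarg N u K α a (W t) := by
      rw [hWt1, hF]
      exact owaUtil_insert N u K α hu haW
    set Δ := owaMarg N u K α a (W t) with hΔ
    have hΔ0 : 0 ≤ Δ := owaMarg_nonneg N u K α hα_nonneg hα_mono a (W t)
    -- each marginal of an unchosen element is at most Δ
    have hmargle : ∀ b ∈ S \ W t, owaMarg N u K α b (W t) ≤ Δ := by
      intro b hb
      have hbW : b ∉ W t := (Finset.mem_sdiff.mp hb).2
      have h1 : F (insert b (W t)) = F (W t) + owaMarg N u K α b (W t) :=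
        owaUtil_insert N u K α hu hbW
      have h2 : F (insert b (W t)) ≤ F (insert a (W t)) := hmax b hbW
      have h3 : F (insert a (W t)) = F (W t) + Δ := by
        rw [← hWt1, hΔeq]
      linarith
    -- OPT - F(W t) ≤ K * Δ
    have hkey : OPT - F (W t) ≤ (K:ℝ) * Δ := by
      have hc1 : OPT ≤ F (W t ∪ S) := by
        rw [hOPT, hSval]
        exact owaUtil_mono N u K α hu hα_nonneg hα_mono Finset.subset_union_right
      have hc2 : F (W t ∪ S) ≤ F (W t) + ∑ b ∈ S \ W t, owaMarg N u K α b (W t) := by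
        have := owaUtil_union_le N u K α hu hα_nonneg hα_mono (W t) (S \ W t)
          Finset.sdiff_disjoint
        rwa [Finset.union_sdiff_self_eq_union] at this
      have hc3 : ∑ b ∈ S \ W t, owaMarg N u K α b (W t) ≤ (S \ W t).card * Δ := by
        calc ∑ b ∈ S \ W t, owaMarg N u K α b (W t) ≤ ∑ _b ∈ S \ W t, Δ :=
              Finset.sum_le_sum hmargle
          _ = (S \ W t).card * Δ := by rw [Finset.sum_const, nsmul_eq_mul]
      have hc4 : ((S \ W t).card : ℝ) ≤ (K : ℝ) := by
        have : (S \ W t).card ≤ S.card := Finset.card_le_card (Finset.sdiff_subset)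
        exact_mod_cast (hScard ▸ this)
      have hc5 : ((S \ W t).card : ℝ) * Δ ≤ (K:ℝ) * Δ :=
        mul_le_mul_of_nonneg_right hc4 hΔ0
      linarith
    have hΔge : (OPT - F (W t)) / (K:ℝ) ≤ Δ := by
      rw [div_le_iff₀ hKpos]
      linarith [hkey]
    have : OPT - F (W (t+1)) = OPT - F (W t) - Δ := by rw [hΔeq]; ring
    rw [this]
    have expand : (1 - 1/(K:ℝ)) * (OPT - F (W t))
        = OPT - F (W t) - (OPT - F (W t)) / (K:ℝ) := by
      field_simp
    rw [expand]
    linarith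
  -- iterate
  have hiter : ∀ t, t ≤ K → OPT - F (W t) ≤ (1 - 1/(K:ℝ))^t * OPT := by
    intro t
    induction t with
    | zero =>
      intro _
      rw [hW0, hF, owaUtil_empty]
      simp
    | succ t ih =>
      intro ht
      have ht' : t < K := ht
      have h1 := hstep' t ht'
      have h2 := ih (le_of_lt ht')
      calc OPT - F (W (t+1)) ≤ (1 - 1/(K:ℝ)) * (OPT - F (W t)) := h1
        _ ≤ (1 - 1/(K:ℝ)) * ((1 - 1/(K:ℝ))^t * OPT) :=
            mul_le_mul_of_nonneg_left h2 hq0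
        _ = (1 - 1/(K:ℝ))^(t+1) * OPT := by ring
  have hfinal : (1 - (1 - 1/(K:ℝ))^K) * OPT ≤ F (W K) := by
    have := hiter K le_rfl
    nlinarith [this]
  constructor
  · -- (1 - 1/e) * OPT ≤ (1 - (1-1/K)^K) * OPT
    have hpow : (1 - 1/(K:ℝ))^K ≤ 1 / Real.exp 1 := by
      have h1 : 1 - 1/(K:ℝ) ≤ Real.exp (-(1/(K:ℝ))) := by
        have := Real.add_one_le_exp (-(1/(K:ℝ)))
        linarith
      have h2 : (1 - 1/(K:ℝ))^K ≤ (Real.exp (-(1/(K:ℝ))))^K :=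
        pow_le_pow_left₀ hq0 h1 K
      have h3 : (Real.exp (-(1/(K:ℝ))))^K = Real.exp ((K:ℝ) * (-(1/(K:ℝ)))) := by
        rw [← Real.exp_nat_mul]
      have h4 : (K:ℝ) * (-(1/(K:ℝ))) = -1 := by
        field_simp
      rw [h3, h4, Real.exp_neg, ← one_div] at h2
      exact h2
    have : (1 : ℝ) - 1 / Real.exp 1 ≤ 1 - (1 - 1/(K:ℝ))^K := by linarith
    exact mul_le_mul_of_nonneg_right this hOPT_nonneg
  · exact hfinal
end

section
/- Let G = (V, E) be a graph with |V| = m and |E| = n, and let K be an integer with 3 ≤ K ≤ m. Set x = 4n(m+2)(K+4). Form an item set A' = V ∪ {d_1, d_2} ∪ H with H = {h_1, …, h_x}, so |A'| = m+x+2, and for each edge e = {v, v'} ∈ E introduce two agents e^1 and e^2 with Borda-based utilities derived from the following linear orders (blocks listed from most to least preferred, with an arbitrary fixed order inside each block): e^1 ranks d_1, then d_2, then V ∖ {v, v'}, then H, then {v, v'}; e^2 ranks d_1, then d_2, then {v, v'}, then H, then V ∖ {v, v'}. Use the (K+1)-best OWA of length K+2. Then, for every choice of the within-block orders, the following are equivalent: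 (i) G has a vertex cover of size at most K; (ii) there exists a set W with {d_1, d_2} ⊆ W ⊆ V ∪ {d_1, d_2} and |W| = K+2 such that the sum, over the 2n edge-agents, of their (K+1)-best OWA utilities from W is at least n·x·(K+4). -/
open Finset


lemma sum_getD (L : List ℝ) : ∑ j ∈ Finset.range L.length, L.getD j 0 = L.sum := by
  induction L with
  | nil => simp
  | cons a t ih =>
    rw [List.length_cons, Finset.sum_range_succ']
    simp only [List.getD_cons_succ, List.getD_cons_zero, ih, List.sum_cons]
    ring

lemma count_lt {α : Type*} [DecidableEq α] {N : ℕ} (f : α ≃ Fin N) {a : α} {T : Finset α}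
    (h : ∀ t ∈ T, f a < f t) : (f a : ℕ) + T.card < N := by
  have hinj : Function.Injective (fun t => ((f t : ℕ))) := fun s t hst => by
    apply f.injective; exact Fin.val_injective hst
  have hsub : T.image (fun t => ((f t : ℕ))) ⊆ Finset.Ico ((f a : ℕ) + 1) N := by
    intro y hy
    obtain ⟨t, ht, rfl⟩ := Finset.mem_image.mp hy
    simp only [Finset.mem_Ico]
    exact ⟨h t ht, (f t).isLt⟩
  have := Finset.card_le_card hsub
  rw [Finset.card_image_of_injective _ hinj, Nat.card_Ico] at this
  have := (f a).isLt
  omega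

lemma count_gt {α : Type*} [DecidableEq α] {N : ℕ} (f : α ≃ Fin N) {a : α} {T : Finset α}
    (h : ∀ t ∈ T, f t < f a) : T.card ≤ (f a : ℕ) := by
  have hinj : Function.Injective (fun t => ((f t : ℕ))) := fun s t hst => by
    apply f.injective; exact Fin.val_injective hst
  have hsub : T.image (fun t => ((f t : ℕ))) ⊆ Finset.range (f a : ℕ) := by
    intro y hy
    obtain ⟨t, ht, rfl⟩ := Finset.mem_image.mp hy
    exact Finset.mem_range.mpr (h t ht)
  have := Finset.card_le_card hsub
  rwa [Finset.card_image_of_injective _ hinj, Finset.card_range] at this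

lemma sorted_head_le {l : List ℝ} (hl : l.Pairwise (· ≤ ·)) (hne : l ≠ []) {y : ℝ}
    (hy : y ∈ l) : l.head hne ≤ y := by
  cases l with
  | nil => simp at hne
  | cons a t =>
    rcases List.mem_cons.mp hy with rfl | hy
    · exact le_refl _
    · exact (List.pairwise_cons.mp hl).1 y hy

/-- the inner (per-agent) sum of `owaUtil` for the `(K+1)`-best OWA of length `K+2`. -/
noncomputable def inAgent {A : Type*} [DecidableEq A] (u : A → ℝ) (K : ℕ) (W : Finset A) : ℝ :=
  ∑ j ∈ Finset.range (K + 2), (if j < K + 1 then (1 : ℝ) else 0) *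
    (((W.1.map u).sort (· ≤ ·)).reverse.getD j 0)

lemma owa_inner {A : Type*} [DecidableEq A] (u : A → ℝ) (K : ℕ) (W : Finset A)
    (hW : W.card = K + 2) :
    ∃ b ∈ W, (∀ a ∈ W, u b ≤ u a) ∧ inAgent u K W = (∑ a ∈ W, u a) - u b := by
  classical
  set s := (W.1.map u).sort (· ≤ ·) with hs
  have hlen : s.length = K + 2 := by
    rw [hs, Multiset.length_sort, Multiset.card_map]; exact hW
  have hne : s ≠ [] := by
    intro h; rw [h] at hlen; simp at hlen
  have hsort : s.Pairwise (· ≤ ·) := Multiset.pairwise_sort _ _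
  have hmem : s.head hne ∈ (W.1.map u) := by
    rw [← Multiset.mem_sort (· ≤ ·)]
    exact List.head_mem hne
  obtain ⟨b, hb, hub⟩ := Multiset.mem_map.mp hmem
  refine ⟨b, hb, ?_, ?_⟩
  · intro a ha
    rw [hub]
    apply sorted_head_le hsort hne
    rw [Multiset.mem_sort (· ≤ ·)]
    exact Multiset.mem_map_of_mem u ha
  · have hrevlen : s.reverse.length = K + 2 := by rw [List.length_reverse]; exact hlen
    have hsum : ∑ j ∈ Finset.range (K + 2), s.reverse.getD j 0 = ∑ a ∈ W, u a := by
      rw [← hrevlen, sum_getD, List.sum_reverse]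
      have : (s : Multiset ℝ).sum = (W.1.map u).sum := by
        rw [hs, Multiset.sort_eq]
      rw [← Multiset.sum_coe] at *
      rw [this, Finset.sum]
    have hlast : s.reverse.getD (K + 1) 0 = u b := by
      rw [List.getD_eq_getElem _ _ (by omega : K + 1 < s.reverse.length)]
      rw [List.getElem_reverse]
      have h0 : s.length - 1 - (K + 1) = 0 := by omega
      simp only [h0]
      rw [hub, List.head_eq_getElem]
    calc inAgent u K W
        = ∑ j ∈ Finset.range (K + 1), s.reverse.getD j 0 := by
          rw [inAgent, Finset.sum_range_succ, if_neg (lt_irrefl (K+1)), zero_mul, add_zero]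
          refine Finset.sum_congr rfl fun j hj => ?_
          rw [if_pos (Finset.mem_range.mp hj), one_mul]
      _ = (∑ j ∈ Finset.range (K + 2), s.reverse.getD j 0) - s.reverse.getD (K + 1) 0 := by
          conv_rhs => rw [show K + 2 = (K+1) + 1 from rfl, Finset.sum_range_succ]
          ring
      _ = (∑ a ∈ W, u a) - u b := by rw [hsum, hlast]


open scoped Classical


lemma pair_low {V A : Type*} [DecidableEq V] [DecidableEq A]
    (m x K : ℕ) (hK : 3 ≤ K) (hm3 : 3 ≤ m)
    (d1 d2 : A) (inl : V → A) (hinj : Function.Injective inl)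
    (hd12 : d1 ≠ d2) (h1im : ∀ z, d1 ≠ inl z) (h2im : ∀ z, d2 ≠ inl z)
    (u0 u1 : A → ℝ) (P : V → Prop) [DecidablePred P]
    (hnn0 : ∀ a, 0 ≤ u0 a) (hnn1 : ∀ a, 0 ≤ u1 a)
    (hb01 : u0 d1 = (m : ℝ) + x + 1) (hb02 : u0 d2 = (m : ℝ) + x)
    (hb11 : u1 d1 = (m : ℝ) + x + 1) (hb12 : u1 d2 = (m : ℝ) + x)
    (hP0 : ∀ z, P z → u0 (inl z) ≤ 1)
    (hN0 : ∀ z, ¬ P z → ((x : ℝ) + 2 ≤ u0 (inl z) ∧ u0 (inl z) ≤ (m : ℝ) + x - 1))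
    (hP1 : ∀ z, P z → ((m : ℝ) + x - 2 ≤ u1 (inl z) ∧ u1 (inl z) ≤ (m : ℝ) + x - 1))
    (hN1 : ∀ z, ¬ P z → u1 (inl z) ≤ (m : ℝ) - 3)
    (hfil : ∀ T : Finset V, (T.filter P).card ≤ 2)
    (S : Finset V) (hS : S.card = K)
    (hcov : ∃ v ∈ S, P v) :
    (x : ℝ) * ((K : ℝ) + 4) ≤
      inAgent u0 K (insert d1 (insert d2 (S.image inl))) +
      inAgent u1 K (insert d1 (insert d2 (S.image inl))) := by
  have hni2 : d2 ∉ S.image inl := by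
    simp only [Finset.mem_image]
    rintro ⟨z, -, h⟩
    exact h2im z h.symm
  have hni1 : d1 ∉ insert d2 (S.image inl) := by
    simp only [Finset.mem_insert, Finset.mem_image]
    rintro (h | ⟨z, -, h⟩)
    · exact hd12 h
    · exact h1im z h.symm
  set W : Finset A := insert d1 (insert d2 (S.image inl)) with hW
  have hWc : W.card = K + 2 := by
    rw [hW, Finset.card_insert_of_notMem hni1, Finset.card_insert_of_notMem hni2,
      Finset.card_image_of_injective _ hinj, hS]
  have hinlW : ∀ z ∈ S, inl z ∈ W := fun z hz =>
    Finset.mem_insert_of_mem (Finset.mem_insert_of_mem (Finset.mem_image_of_mem _ hz))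
  obtain ⟨b0, hb0W, hb0min, hb0eq⟩ := owa_inner u0 K W hWc
  obtain ⟨b1, hb1W, hb1min, hb1eq⟩ := owa_inner u1 K W hWc
  have hsplit : ∀ u : A → ℝ, u d1 + u d2 + ∑ z ∈ S, u (inl z) = ∑ a ∈ W, u a := by
    intro u
    rw [hW, Finset.sum_insert hni1, Finset.sum_insert hni2,
      Finset.sum_image (fun a _ b _ h => hinj h)]
    ring
  have hmr : (3 : ℝ) ≤ (m : ℝ) := by exact_mod_cast hm3
  have hKr : (3 : ℝ) ≤ (K : ℝ) := by exact_mod_cast hK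
  have hScr : ((S.card : ℕ) : ℝ) = (K : ℝ) := by exact_mod_cast congrArg Nat.cast hS
  have hxr : (0 : ℝ) ≤ (x : ℝ) := Nat.cast_nonneg x
  set SE := S.filter P with hSE
  set SN := S.filter (fun z => ¬ P z) with hSN
  have hcards : SE.card + SN.card = K := by
    rw [hSE, hSN, Finset.card_filter_add_card_filter_not, hS]
  have hsplit2 : ∀ u : A → ℝ, ∑ z ∈ S, u (inl z) =
      ∑ z ∈ SE, u (inl z) + ∑ z ∈ SN, u (inl z) := by
    intro u
    rw [hSE, hSN]
    exact (Finset.sum_filter_add_sum_filter_not S _ _).symm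
  have hce : (SE.card : ℝ) + (SN.card : ℝ) = (K : ℝ) := by exact_mod_cast hcards
  have hSEnn : (0 : ℝ) ≤ (SE.card : ℝ) := Nat.cast_nonneg _
  have hSNnn : (0 : ℝ) ≤ (SN.card : ℝ) := Nat.cast_nonneg _
  obtain ⟨v0, hv0S, hv0e⟩ := hcov
  have hcE2 : SE.card ≤ 2 := hfil S
  have hSNne : SN.Nonempty := by rw [← Finset.card_pos]; omega
  obtain ⟨w0, hw0⟩ := hSNne
  have hw0S : w0 ∈ S := (Finset.mem_filter.mp hw0).1
  have hw0e : ¬ P w0 := (Finset.mem_filter.mp hw0).2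
  have hmin0 : u0 b0 ≤ 1 := le_trans (hb0min _ (hinlW v0 hv0S)) (hP0 v0 hv0e)
  have hmin1 : u1 b1 ≤ (m : ℝ) - 3 := le_trans (hb1min _ (hinlW w0 hw0S)) (hN1 w0 hw0e)
  have hsum0 : (2 * ((m : ℝ) + x) + 1) + (SN.card : ℝ) * ((x : ℝ) + 2) ≤
      ∑ a ∈ W, u0 a := by
    rw [← hsplit, hb01, hb02, hsplit2]
    have hc1 : (0 : ℝ) ≤ ∑ z ∈ SE, u0 (inl z) := Finset.sum_nonneg fun z _ => hnn0 _
    have hc2 : (SN.card : ℝ) * ((x : ℝ) + 2) ≤ ∑ z ∈ SN, u0 (inl z) := by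
      have := Finset.card_nsmul_le_sum SN (fun z => u0 (inl z)) ((x : ℝ) + 2)
        (fun z hz => (hN0 z (Finset.mem_filter.mp hz).2).1)
      rwa [nsmul_eq_mul] at this
    linarith
  have hsum1 : (2 * ((m : ℝ) + x) + 1) + (SE.card : ℝ) * ((m : ℝ) + x - 2) ≤
      ∑ a ∈ W, u1 a := by
    rw [← hsplit, hb11, hb12, hsplit2]
    have hc1 : (0 : ℝ) ≤ ∑ z ∈ SN, u1 (inl z) := Finset.sum_nonneg fun z _ => hnn1 _
    have hc2 : (SE.card : ℝ) * ((m : ℝ) + x - 2) ≤ ∑ z ∈ SE, u1 (inl z) := by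
      have := Finset.card_nsmul_le_sum SE (fun z => u1 (inl z)) ((m : ℝ) + x - 2)
        (fun z hz => (hP1 z (Finset.mem_filter.mp hz).2).1)
      rwa [nsmul_eq_mul] at this
    linarith
  rw [hb0eq, hb1eq]
  have hkey : (SN.card : ℝ) * ((x : ℝ) + 2) + (SE.card : ℝ) * ((m : ℝ) + x - 2) =
      (K : ℝ) * x + 2 * (SN.card : ℝ) + (SE.card : ℝ) * ((m : ℝ) - 2) := by
    have hsn : (SN.card : ℝ) = (K : ℝ) - SE.card := by linarith
    rw [hsn]; ring
  have hprod : (0 : ℝ) ≤ (SE.card : ℝ) * ((m : ℝ) - 2) := mul_nonneg hSEnn (by linarith)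
  linarith [hsum0, hsum1, hmin0, hmin1, hkey, hprod, hSNnn]

lemma pair_up {V A : Type*} [DecidableEq V] [DecidableEq A]
    (m x K : ℕ) (hK : 3 ≤ K) (hm3 : 3 ≤ m)
    (d1 d2 : A) (inl : V → A) (hinj : Function.Injective inl)
    (hd12 : d1 ≠ d2) (h1im : ∀ z, d1 ≠ inl z) (h2im : ∀ z, d2 ≠ inl z)
    (u0 u1 : A → ℝ) (P : V → Prop) [DecidablePred P]
    (hnn0 : ∀ a, 0 ≤ u0 a) (hnn1 : ∀ a, 0 ≤ u1 a)
    (hb01 : u0 d1 = (m : ℝ) + x + 1) (hb02 : u0 d2 = (m : ℝ) + x)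
    (hb11 : u1 d1 = (m : ℝ) + x + 1) (hb12 : u1 d2 = (m : ℝ) + x)
    (hP0 : ∀ z, P z → u0 (inl z) ≤ 1)
    (hN0 : ∀ z, ¬ P z → ((x : ℝ) + 2 ≤ u0 (inl z) ∧ u0 (inl z) ≤ (m : ℝ) + x - 1))
    (hP1 : ∀ z, P z → ((m : ℝ) + x - 2 ≤ u1 (inl z) ∧ u1 (inl z) ≤ (m : ℝ) + x - 1))
    (hN1 : ∀ z, ¬ P z → u1 (inl z) ≤ (m : ℝ) - 3)
    (hfil : ∀ T : Finset V, (T.filter P).card ≤ 2)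
    (S : Finset V) (hS : S.card = K) :
    inAgent u0 K (insert d1 (insert d2 (S.image inl))) +
    inAgent u1 K (insert d1 (insert d2 (S.image inl))) ≤
      (x : ℝ) * ((K : ℝ) + 4) + (2 * K * m + 4 * m + 6) := by
  have hni2 : d2 ∉ S.image inl := by
    simp only [Finset.mem_image]
    rintro ⟨z, -, h⟩
    exact h2im z h.symm
  have hni1 : d1 ∉ insert d2 (S.image inl) := by
    simp only [Finset.mem_insert, Finset.mem_image]
    rintro (h | ⟨z, -, h⟩)
    · exact hd12 h
    · exact h1im z h.symm
  set W : Finset A := insert d1 (insert d2 (S.image inl)) with hW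
  have hWc : W.card = K + 2 := by
    rw [hW, Finset.card_insert_of_notMem hni1, Finset.card_insert_of_notMem hni2,
      Finset.card_image_of_injective _ hinj, hS]
  have hinlW : ∀ z ∈ S, inl z ∈ W := fun z hz =>
    Finset.mem_insert_of_mem (Finset.mem_insert_of_mem (Finset.mem_image_of_mem _ hz))
  obtain ⟨b0, hb0W, hb0min, hb0eq⟩ := owa_inner u0 K W hWc
  obtain ⟨b1, hb1W, hb1min, hb1eq⟩ := owa_inner u1 K W hWc
  have hsplit : ∀ u : A → ℝ, u d1 + u d2 + ∑ z ∈ S, u (inl z) = ∑ a ∈ W, u a := by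
    intro u
    rw [hW, Finset.sum_insert hni1, Finset.sum_insert hni2,
      Finset.sum_image (fun a _ b _ h => hinj h)]
    ring
  have hmr : (3 : ℝ) ≤ (m : ℝ) := by exact_mod_cast hm3
  have hKr : (3 : ℝ) ≤ (K : ℝ) := by exact_mod_cast hK
  have hScr : ((S.card : ℕ) : ℝ) = (K : ℝ) := by exact_mod_cast congrArg Nat.cast hS
  have hxr : (0 : ℝ) ≤ (x : ℝ) := Nat.cast_nonneg x
  set SE := S.filter P with hSE
  set SN := S.filter (fun z => ¬ P z) with hSN
  have hcards : SE.card + SN.card = K := by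
    rw [hSE, hSN, Finset.card_filter_add_card_filter_not, hS]
  have hsplit2 : ∀ u : A → ℝ, ∑ z ∈ S, u (inl z) =
      ∑ z ∈ SE, u (inl z) + ∑ z ∈ SN, u (inl z) := by
    intro u
    rw [hSE, hSN]
    exact (Finset.sum_filter_add_sum_filter_not S _ _).symm
  have hce : (SE.card : ℝ) + (SN.card : ℝ) = (K : ℝ) := by exact_mod_cast hcards
  have hSEnn : (0 : ℝ) ≤ (SE.card : ℝ) := Nat.cast_nonneg _
  have hSNnn : (0 : ℝ) ≤ (SN.card : ℝ) := Nat.cast_nonneg _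
  have hcE2 : (SE.card : ℝ) ≤ 2 := by exact_mod_cast hfil S
  have hsum0 : ∑ a ∈ W, u0 a ≤
      (2 * ((m : ℝ) + x) + 1) + (SN.card : ℝ) * ((m : ℝ) + x - 1) + (SE.card : ℝ) * 1 := by
    rw [← hsplit, hb01, hb02, hsplit2]
    have hc1 : ∑ z ∈ SE, u0 (inl z) ≤ (SE.card : ℝ) * 1 := by
      have := Finset.sum_le_card_nsmul SE (fun z => u0 (inl z)) (1 : ℝ)
        (fun z hz => hP0 z (Finset.mem_filter.mp hz).2)
      rwa [nsmul_eq_mul] at this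
    have hc2 : ∑ z ∈ SN, u0 (inl z) ≤ (SN.card : ℝ) * ((m : ℝ) + x - 1) := by
      have := Finset.sum_le_card_nsmul SN (fun z => u0 (inl z)) ((m : ℝ) + x - 1)
        (fun z hz => (hN0 z (Finset.mem_filter.mp hz).2).2)
      rwa [nsmul_eq_mul] at this
    linarith
  have hsum1 : ∑ a ∈ W, u1 a ≤
      (2 * ((m : ℝ) + x) + 1) + (SE.card : ℝ) * ((m : ℝ) + x - 1) +
        (SN.card : ℝ) * ((m : ℝ) - 3) := by
    rw [← hsplit, hb11, hb12, hsplit2]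
    have hc1 : ∑ z ∈ SE, u1 (inl z) ≤ (SE.card : ℝ) * ((m : ℝ) + x - 1) := by
      have := Finset.sum_le_card_nsmul SE (fun z => u1 (inl z)) ((m : ℝ) + x - 1)
        (fun z hz => (hP1 z (Finset.mem_filter.mp hz).2).2)
      rwa [nsmul_eq_mul] at this
    have hc2 : ∑ z ∈ SN, u1 (inl z) ≤ (SN.card : ℝ) * ((m : ℝ) - 3) := by
      have := Finset.sum_le_card_nsmul SN (fun z => u1 (inl z)) ((m : ℝ) - 3)
        (fun z hz => hN1 z (Finset.mem_filter.mp hz).2)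
      rwa [nsmul_eq_mul] at this
    linarith
  rw [hb0eq, hb1eq]
  have hmin0 : 0 ≤ u0 b0 := hnn0 _
  have hmin1 : 0 ≤ u1 b1 := hnn1 _
  have hkey1 : (SN.card : ℝ) * ((m : ℝ) + x - 1) + (SE.card : ℝ) * ((m : ℝ) + x - 1) =
      (K : ℝ) * ((m : ℝ) + x - 1) := by
    have hsn : (SN.card : ℝ) = (K : ℝ) - SE.card := by linarith
    rw [hsn]; ring
  have hkey2 : (SN.card : ℝ) * ((m : ℝ) - 3) ≤ (K : ℝ) * ((m : ℝ) - 3) :=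
    mul_le_mul_of_nonneg_right (by linarith) (by linarith)
  have hkey3 : (K : ℝ) * ((m : ℝ) + x - 1) + (K : ℝ) * ((m : ℝ) - 3) =
      (K : ℝ) * x + 2 * K * m - 4 * K := by ring
  linarith [hsum0, hsum1, hmin0, hmin1, hkey1, hkey2, hkey3, hcE2, hKr]

lemma pair_unc {V A : Type*} [DecidableEq V] [DecidableEq A]
    (m x K : ℕ) (hK : 3 ≤ K) (hm3 : 3 ≤ m)
    (d1 d2 : A) (inl : V → A) (hinj : Function.Injective inl)
    (hd12 : d1 ≠ d2) (h1im : ∀ z, d1 ≠ inl z) (h2im : ∀ z, d2 ≠ inl z)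
    (u0 u1 : A → ℝ) (P : V → Prop) [DecidablePred P]
    (hnn0 : ∀ a, 0 ≤ u0 a) (hnn1 : ∀ a, 0 ≤ u1 a)
    (hb01 : u0 d1 = (m : ℝ) + x + 1) (hb02 : u0 d2 = (m : ℝ) + x)
    (hb11 : u1 d1 = (m : ℝ) + x + 1) (hb12 : u1 d2 = (m : ℝ) + x)
    (hP0 : ∀ z, P z → u0 (inl z) ≤ 1)
    (hN0 : ∀ z, ¬ P z → ((x : ℝ) + 2 ≤ u0 (inl z) ∧ u0 (inl z) ≤ (m : ℝ) + x - 1))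
    (hP1 : ∀ z, P z → ((m : ℝ) + x - 2 ≤ u1 (inl z) ∧ u1 (inl z) ≤ (m : ℝ) + x - 1))
    (hN1 : ∀ z, ¬ P z → u1 (inl z) ≤ (m : ℝ) - 3)
    (hfil : ∀ T : Finset V, (T.filter P).card ≤ 2)
    (S : Finset V) (hS : S.card = K)
    (hunc : ∀ v ∈ S, ¬ P v) :
    inAgent u0 K (insert d1 (insert d2 (S.image inl))) +
    inAgent u1 K (insert d1 (insert d2 (S.image inl))) ≤
      (x : ℝ) * ((K : ℝ) + 4) + (2 * K * m + 4 * m + 6) - x := by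
  have hni2 : d2 ∉ S.image inl := by
    simp only [Finset.mem_image]
    rintro ⟨z, -, h⟩
    exact h2im z h.symm
  have hni1 : d1 ∉ insert d2 (S.image inl) := by
    simp only [Finset.mem_insert, Finset.mem_image]
    rintro (h | ⟨z, -, h⟩)
    · exact hd12 h
    · exact h1im z h.symm
  set W : Finset A := insert d1 (insert d2 (S.image inl)) with hW
  have hWc : W.card = K + 2 := by
    rw [hW, Finset.card_insert_of_notMem hni1, Finset.card_insert_of_notMem hni2,
      Finset.card_image_of_injective _ hinj, hS]
  have hinlW : ∀ z ∈ S, inl z ∈ W := fun z hz =>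
    Finset.mem_insert_of_mem (Finset.mem_insert_of_mem (Finset.mem_image_of_mem _ hz))
  obtain ⟨b0, hb0W, hb0min, hb0eq⟩ := owa_inner u0 K W hWc
  obtain ⟨b1, hb1W, hb1min, hb1eq⟩ := owa_inner u1 K W hWc
  have hsplit : ∀ u : A → ℝ, u d1 + u d2 + ∑ z ∈ S, u (inl z) = ∑ a ∈ W, u a := by
    intro u
    rw [hW, Finset.sum_insert hni1, Finset.sum_insert hni2,
      Finset.sum_image (fun a _ b _ h => hinj h)]
    ring
  have hmr : (3 : ℝ) ≤ (m : ℝ) := by exact_mod_cast hm3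
  have hKr : (3 : ℝ) ≤ (K : ℝ) := by exact_mod_cast hK
  have hScr : ((S.card : ℕ) : ℝ) = (K : ℝ) := by exact_mod_cast congrArg Nat.cast hS
  have hxr : (0 : ℝ) ≤ (x : ℝ) := Nat.cast_nonneg x
  have hmin0 : (x : ℝ) + 2 ≤ u0 b0 := by
    rw [hW] at hb0W
    rcases Finset.mem_insert.mp hb0W with rfl | hb
    · rw [hb01]; linarith
    rcases Finset.mem_insert.mp hb with rfl | hb
    · rw [hb02]; linarith
    · obtain ⟨z, hzS, rfl⟩ := Finset.mem_image.mp hb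
      exact (hN0 z (hunc z hzS)).1
  have hsum0 : ∑ a ∈ W, u0 a ≤
      (2 * ((m : ℝ) + x) + 1) + (K : ℝ) * ((m : ℝ) + x - 1) := by
    rw [← hsplit, hb01, hb02]
    have hc2 : ∑ z ∈ S, u0 (inl z) ≤ (K : ℝ) * ((m : ℝ) + x - 1) := by
      have := Finset.sum_le_card_nsmul S (fun z => u0 (inl z)) ((m : ℝ) + x - 1)
        (fun z hz => (hN0 z (hunc z hz)).2)
      rw [nsmul_eq_mul, hScr] at this
      exact this
    linarith
  have hsum1 : ∑ a ∈ W, u1 a ≤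
      (2 * ((m : ℝ) + x) + 1) + (K : ℝ) * ((m : ℝ) - 3) := by
    rw [← hsplit, hb11, hb12]
    have hc2 : ∑ z ∈ S, u1 (inl z) ≤ (K : ℝ) * ((m : ℝ) - 3) := by
      have := Finset.sum_le_card_nsmul S (fun z => u1 (inl z)) ((m : ℝ) - 3)
        (fun z hz => hN1 z (hunc z hz))
      rw [nsmul_eq_mul, hScr] at this
      exact this
    linarith
  rw [hb0eq, hb1eq]
  have hmin1 : 0 ≤ u1 b1 := hnn1 _
  have hkey3 : (K : ℝ) * ((m : ℝ) + x - 1) + (K : ℝ) * ((m : ℝ) - 3) =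
      (K : ℝ) * x + 2 * K * m - 4 * K := by ring
  linarith [hsum0, hsum1, hmin0, hmin1, hkey3, hKr]


set_option maxHeartbeats 1000000 in
/-- Correctness of the reduction used for NP-hardness of `(K−1)`-best-OWA-Winner with
Borda utilities. Items are `A' = V ⊕ {d₁, d₂} ⊕ H` with `|H| = x = 4n(m+2)(K+4)`;
for each edge `e = {v, v'}` there are two agents `(e, 0)` and `(e, 1)` whose Borda
utilities come from rankings `ρ` (0-indexed positions, utility `= |A'| − 1 − position`)
respecting the block structure: agent `(e,0)` ranks `d₁`, then `d₂`, then `V ∖ {v,v'}`,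
then `H`, then `{v,v'}`; agent `(e,1)` ranks `d₁`, then `d₂`, then `{v,v'}`, then `H`,
then `V ∖ {v,v'}`. With the `(K+1)`-best OWA of length `K+2`, the graph `G` has a
vertex cover of size at most `K` iff there is a set `W` with `{d₁,d₂} ⊆ W ⊆ V ∪ {d₁,d₂}`
and `|W| = K + 2` whose total utility over the `2n` edge-agents is at least `n·x·(K+4)`. -/
theorem stmt_8 {V : Type*} [Fintype V] [DecidableEq V]
    (G : SimpleGraph V) [DecidableRel G.Adj]
    (m n K : ℕ) (hm : Fintype.card V = m) (hn : G.edgeFinset.card = n)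
    (hK : 3 ≤ K) (hKm : K ≤ m)
    (x : ℕ) (hx : x = 4 * n * (m + 2) * (K + 4))
    (ρ : Sym2 V × Fin 2 → (V ⊕ Fin 2 ⊕ Fin x) ≃ Fin (m + x + 2))
    -- every edge-agent ranks `d₁` before `d₂`
    (hd : ∀ e ∈ G.edgeFinset, ∀ b : Fin 2,
      ρ (e, b) (Sum.inr (Sum.inl 0)) < ρ (e, b) (Sum.inr (Sum.inl 1)))
    -- agent `(e, 0)`: `d₂` before all non-endpoints
    (h01 : ∀ e ∈ G.edgeFinset, ∀ v : V, v ∉ e →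
      ρ (e, 0) (Sum.inr (Sum.inl 1)) < ρ (e, 0) (Sum.inl v))
    -- agent `(e, 0)`: all non-endpoints before all of `H`
    (h02 : ∀ e ∈ G.edgeFinset, ∀ v : V, v ∉ e → ∀ j : Fin x,
      ρ (e, 0) (Sum.inl v) < ρ (e, 0) (Sum.inr (Sum.inr j)))
    -- agent `(e, 0)`: all of `H` before the endpoints
    (h03 : ∀ e ∈ G.edgeFinset, ∀ j : Fin x, ∀ v ∈ e,
      ρ (e, 0) (Sum.inr (Sum.inr j)) < ρ (e, 0) (Sum.inl v))
    -- agent `(e, 1)`: `d₂` before the endpoints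
    (h11 : ∀ e ∈ G.edgeFinset, ∀ v ∈ e,
      ρ (e, 1) (Sum.inr (Sum.inl 1)) < ρ (e, 1) (Sum.inl v))
    -- agent `(e, 1)`: the endpoints before all of `H`
    (h12 : ∀ e ∈ G.edgeFinset, ∀ v ∈ e, ∀ j : Fin x,
      ρ (e, 1) (Sum.inl v) < ρ (e, 1) (Sum.inr (Sum.inr j)))
    -- agent `(e, 1)`: all of `H` before all non-endpoints
    (h13 : ∀ e ∈ G.edgeFinset, ∀ j : Fin x, ∀ v : V, v ∉ e →
      ρ (e, 1) (Sum.inr (Sum.inr j)) < ρ (e, 1) (Sum.inl v)) :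
    (∃ C : Finset V, C.card ≤ K ∧ ∀ e ∈ G.edgeFinset, ∃ v ∈ C, v ∈ e) ↔
    (∃ W : Finset (V ⊕ Fin 2 ⊕ Fin x),
      Sum.inr (Sum.inl 0) ∈ W ∧ Sum.inr (Sum.inl 1) ∈ W ∧
      (∀ j : Fin x, Sum.inr (Sum.inr j) ∉ W) ∧
      W.card = K + 2 ∧
      (n : ℝ) * (x : ℝ) * ((K : ℝ) + 4) ≤
        owaUtil (G.edgeFinset ×ˢ (Finset.univ : Finset (Fin 2)))
          (fun q a => ((m + x + 2 : ℕ) : ℝ) - 1 - ((ρ q a : ℕ) : ℝ))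
          (K + 2) (fun j => if j < K + 1 then (1 : ℝ) else 0) W) := by
  classical
  set U : Sym2 V × Fin 2 → (V ⊕ Fin 2 ⊕ Fin x) → ℝ :=
    fun q a => ((m + x + 2 : ℕ) : ℝ) - 1 - ((ρ q a : ℕ) : ℝ) with hU
  set d1 : V ⊕ Fin 2 ⊕ Fin x := Sum.inr (Sum.inl 0) with hd1
  set d2 : V ⊕ Fin 2 ⊕ Fin x := Sum.inr (Sum.inl 1) with hd2
  have hm3 : 3 ≤ m := le_trans hK hKm
  -- rewrite the total utility as a sum over edges of per-agent contributions
  have howa : ∀ W : Finset (V ⊕ Fin 2 ⊕ Fin x),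
      owaUtil (G.edgeFinset ×ˢ (Finset.univ : Finset (Fin 2))) U (K + 2)
        (fun j => if j < K + 1 then (1 : ℝ) else 0) W
      = ∑ e ∈ G.edgeFinset, (inAgent (U (e, 0)) K W + inAgent (U (e, 1)) K W) := by
    intro W
    rw [owaUtil, Finset.sum_product]
    refine Finset.sum_congr rfl fun e _ => ?_
    rw [Fin.sum_univ_two]
    rfl
  -- nonnegativity of all utilities
  have hU0 : ∀ q a, 0 ≤ U q a := by
    intro q a
    have h1 : (ρ q a : ℕ) < m + x + 2 := (ρ q a).isLt
    have h2 : ((ρ q a : ℕ) : ℝ) ≤ (m : ℝ) + x + 1 := by exact_mod_cast Nat.lt_succ_iff.mp h1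
    simp only [hU]
    push_cast
    linarith
  -- the per-edge utility facts
  have edge_facts : ∀ e ∈ G.edgeFinset,
      (∀ b : Fin 2, U (e, b) d1 = (m : ℝ) + x + 1 ∧ U (e, b) d2 = (m : ℝ) + x) ∧
      (∀ z ∈ e, U (e, 0) (Sum.inl z) ≤ 1) ∧
      (∀ z : V, z ∉ e → ((x : ℝ) + 2 ≤ U (e, 0) (Sum.inl z) ∧
        U (e, 0) (Sum.inl z) ≤ (m : ℝ) + x - 1)) ∧
      (∀ z ∈ e, ((m : ℝ) + x - 2 ≤ U (e, 1) (Sum.inl z) ∧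
        U (e, 1) (Sum.inl z) ≤ (m : ℝ) + x - 1)) ∧
      (∀ z : V, z ∉ e → U (e, 1) (Sum.inl z) ≤ (m : ℝ) - 3) ∧
      (∀ T : Finset V, (T.filter (fun z => z ∈ e)).card ≤ 2) := by
    intro e
    induction e using Sym2.inductionOn with
    | _ v w =>
    intro he
    have hadj : G.Adj v w := by rwa [SimpleGraph.mem_edgeFinset, SimpleGraph.mem_edgeSet] at he
    have hvw : v ≠ w := hadj.ne
    have hn1 : 1 ≤ n := by rw [← hn]; exact Finset.card_pos.mpr ⟨_, he⟩
    have hx0 : 0 < x := by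
      rw [hx]
      exact Nat.mul_pos (Nat.mul_pos (by omega) (by omega)) (by omega)
    have hcard2 : ({v, w} : Finset V).card ≤ 2 := (Finset.card_insert_le _ _).trans (by simp)
    have hne : (Finset.univ \ ({v, w} : Finset V)).Nonempty := by
      rw [← Finset.card_pos, Finset.card_sdiff_of_subset (Finset.subset_univ _), Finset.card_univ, hm]
      omega
    obtain ⟨u0, hu0⟩ := hne
    have hu0e : u0 ∉ (s(v, w) : Sym2 V) := by
      rcases Finset.mem_sdiff.mp hu0 with ⟨-, h⟩
      simp only [Sym2.mem_iff]
      simpa using h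
    have hvmem : v ∈ (s(v, w) : Sym2 V) := by simp
    have hwmem : w ∈ (s(v, w) : Sym2 V) := by simp
    set h0 : Fin x := ⟨0, hx0⟩ with hh0
    set Hs : Finset (V ⊕ Fin 2 ⊕ Fin x) :=
      (Finset.univ : Finset (Fin x)).image (fun j => Sum.inr (Sum.inr j)) with hHs
    have hHinj : Function.Injective
        (fun j : Fin x => (Sum.inr (Sum.inr j) : V ⊕ Fin 2 ⊕ Fin x)) :=
      fun a b hab => by simpa using hab
    have hHscard : Hs.card = x := by
      rw [hHs, Finset.card_image_of_injective _ hHinj, Finset.card_univ, Fintype.card_fin]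
    set NE : Finset V := Finset.univ.filter (fun y => y ∉ (s(v, w) : Sym2 V)) with hNE
    have hNEcard : NE.card = m - 2 := by
      have hNEeq : NE = Finset.univ \ {v, w} := by
        ext z
        simp [hNE, Sym2.mem_iff]
      rw [hNEeq, Finset.card_sdiff_of_subset (Finset.subset_univ _), Finset.card_univ, hm,
        Finset.card_pair hvw]
    -- positions of d1 and d2
    have hd2pos : ∀ b : Fin 2, (ρ (s(v, w), b) d2 : ℕ) ≤ 1 := by
      intro b
      have hdisj : Disjoint (Finset.univ.image (Sum.inl : V → V ⊕ Fin 2 ⊕ Fin x)) Hs := by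
        simp only [hHs, Finset.disjoint_left, Finset.mem_image]
        rintro a ⟨z, -, rfl⟩ ⟨j, -, h⟩
        exact absurd h (by simp)
      have hT : ((Finset.univ.image (Sum.inl : V → V ⊕ Fin 2 ⊕ Fin x)) ∪ Hs).card = m + x := by
        rw [Finset.card_union_of_disjoint hdisj,
          Finset.card_image_of_injective _ Sum.inl_injective, Finset.card_univ, hm, hHscard]
      have hlt : ∀ t ∈ (Finset.univ.image (Sum.inl : V → V ⊕ Fin 2 ⊕ Fin x)) ∪ Hs,
          ρ (s(v, w), b) d2 < ρ (s(v, w), b) t := by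
        intro t ht
        fin_cases b
        · rcases Finset.mem_union.mp ht with ht | ht
          · obtain ⟨z, -, rfl⟩ := Finset.mem_image.mp ht
            by_cases hz : z ∈ (s(v, w) : Sym2 V)
            · exact lt_trans (lt_trans (h01 _ he u0 hu0e) (h02 _ he u0 hu0e h0))
                (h03 _ he h0 z hz)
            · exact h01 _ he z hz
          · obtain ⟨j, -, rfl⟩ := Finset.mem_image.mp ht
            exact lt_trans (h01 _ he u0 hu0e) (h02 _ he u0 hu0e j)
        · rcases Finset.mem_union.mp ht with ht | ht
          · obtain ⟨z, -, rfl⟩ := Finset.mem_image.mp ht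
            by_cases hz : z ∈ (s(v, w) : Sym2 V)
            · exact h11 _ he z hz
            · exact lt_trans (lt_trans (h11 _ he v hvmem) (h12 _ he v hvmem h0))
                (h13 _ he h0 z hz)
          · obtain ⟨j, -, rfl⟩ := Finset.mem_image.mp ht
            exact lt_trans (h11 _ he v hvmem) (h12 _ he v hvmem j)
      have := count_lt (ρ (s(v, w), b)) hlt
      rw [hT] at this
      omega
    have hd1d2 : ∀ b : Fin 2, (ρ (s(v, w), b) d1 : ℕ) = 0 ∧ (ρ (s(v, w), b) d2 : ℕ) = 1 := by
      intro b
      have h1 : (ρ (s(v, w), b) d1 : ℕ) < (ρ (s(v, w), b) d2 : ℕ) := hd _ he b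
      have h2 := hd2pos b
      omega
    -- endpoint positions for agent 0
    have hE0 : ∀ z ∈ (s(v, w) : Sym2 V), m + x ≤ (ρ (s(v, w), 0) (Sum.inl z) : ℕ) := by
      intro z hz
      set T : Finset (V ⊕ Fin 2 ⊕ Fin x) :=
        insert d1 (insert d2 ((NE.image (Sum.inl : V → V ⊕ Fin 2 ⊕ Fin x)) ∪ Hs)) with hT
      have hdisj : Disjoint (NE.image (Sum.inl : V → V ⊕ Fin 2 ⊕ Fin x)) Hs := by
        simp only [hHs, Finset.disjoint_left, Finset.mem_image]
        rintro a ⟨y, -, rfl⟩ ⟨j, -, h⟩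
        exact absurd h (by simp)
      have hTcard : T.card = m + x := by
        rw [hT, Finset.card_insert_of_notMem (by simp [hd1, hd2, hHs]),
          Finset.card_insert_of_notMem (by simp [hd2, hHs]),
          Finset.card_union_of_disjoint hdisj,
          Finset.card_image_of_injective _ Sum.inl_injective, hNEcard, hHscard]
        omega
      have hlt : ∀ t ∈ T, ρ (s(v, w), 0) t < ρ (s(v, w), 0) (Sum.inl z) := by
        intro t ht
        rw [hT] at ht
        rcases Finset.mem_insert.mp ht with rfl | ht
        · exact lt_trans (hd _ he 0) (lt_trans (lt_trans (h01 _ he u0 hu0e)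
            (h02 _ he u0 hu0e h0)) (h03 _ he h0 z hz))
        rcases Finset.mem_insert.mp ht with rfl | ht
        · exact lt_trans (lt_trans (h01 _ he u0 hu0e) (h02 _ he u0 hu0e h0)) (h03 _ he h0 z hz)
        rcases Finset.mem_union.mp ht with ht | ht
        · obtain ⟨y, hy, rfl⟩ := Finset.mem_image.mp ht
          have hy' : y ∉ (s(v, w) : Sym2 V) := (Finset.mem_filter.mp hy).2
          exact lt_trans (h02 _ he y hy' h0) (h03 _ he h0 z hz)
        · obtain ⟨j, -, rfl⟩ := Finset.mem_image.mp ht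
          exact h03 _ he j z hz
      have := count_gt (ρ (s(v, w), 0)) hlt
      rwa [hTcard] at this
    -- non-endpoint positions for agent 0
    have hN0 : ∀ z : V, z ∉ (s(v, w) : Sym2 V) →
        (ρ (s(v, w), 0) (Sum.inl z) : ℕ) + (x + 2) < m + x + 2 := by
      intro z hz
      set T : Finset (V ⊕ Fin 2 ⊕ Fin x) :=
        insert (Sum.inl v) (insert (Sum.inl w) Hs) with hT
      have hTcard : T.card = x + 2 := by
        rw [hT, Finset.card_insert_of_notMem (by simp [hHs, hvw]),
          Finset.card_insert_of_notMem (by simp [hHs]), hHscard]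
      have hlt : ∀ t ∈ T, ρ (s(v, w), 0) (Sum.inl z) < ρ (s(v, w), 0) t := by
        intro t ht
        rw [hT] at ht
        rcases Finset.mem_insert.mp ht with rfl | ht
        · exact lt_trans (h02 _ he z hz h0) (h03 _ he h0 v hvmem)
        rcases Finset.mem_insert.mp ht with rfl | ht
        · exact lt_trans (h02 _ he z hz h0) (h03 _ he h0 w hwmem)
        · obtain ⟨j, -, rfl⟩ := Finset.mem_image.mp ht
          exact h02 _ he z hz j
      have := count_lt (ρ (s(v, w), 0)) hlt
      rwa [hTcard] at this
    have hN0' : ∀ z : V, z ∉ (s(v, w) : Sym2 V) → 2 ≤ (ρ (s(v, w), 0) (Sum.inl z) : ℕ) := by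
      intro z hz
      have hlt : ∀ t ∈ ({d1, d2} : Finset (V ⊕ Fin 2 ⊕ Fin x)),
          ρ (s(v, w), 0) t < ρ (s(v, w), 0) (Sum.inl z) := by
        intro t ht
        rcases Finset.mem_insert.mp ht with rfl | ht
        · exact lt_trans (hd _ he 0) (h01 _ he z hz)
        · rw [Finset.mem_singleton.mp ht]
          exact h01 _ he z hz
      have := count_gt (ρ (s(v, w), 0)) hlt
      rwa [Finset.card_insert_of_notMem (by simp [hd1, hd2]), Finset.card_singleton] at this
    -- endpoint positions for agent 1
    have hE1 : ∀ z ∈ (s(v, w) : Sym2 V),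
        (ρ (s(v, w), 1) (Sum.inl z) : ℕ) + (m - 2 + x) < m + x + 2 := by
      intro z hz
      set T : Finset (V ⊕ Fin 2 ⊕ Fin x) :=
        (NE.image (Sum.inl : V → V ⊕ Fin 2 ⊕ Fin x)) ∪ Hs with hT
      have hdisj : Disjoint (NE.image (Sum.inl : V → V ⊕ Fin 2 ⊕ Fin x)) Hs := by
        simp only [hHs, Finset.disjoint_left, Finset.mem_image]
        rintro a ⟨y, -, rfl⟩ ⟨j, -, h⟩
        exact absurd h (by simp)
      have hTcard : T.card = m - 2 + x := by
        rw [hT, Finset.card_union_of_disjoint hdisj,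
          Finset.card_image_of_injective _ Sum.inl_injective, hNEcard, hHscard]
      have hlt : ∀ t ∈ T, ρ (s(v, w), 1) (Sum.inl z) < ρ (s(v, w), 1) t := by
        intro t ht
        rw [hT] at ht
        rcases Finset.mem_union.mp ht with ht | ht
        · obtain ⟨y, hy, rfl⟩ := Finset.mem_image.mp ht
          have hy' : y ∉ (s(v, w) : Sym2 V) := (Finset.mem_filter.mp hy).2
          exact lt_trans (h12 _ he z hz h0) (h13 _ he h0 y hy')
        · obtain ⟨j, -, rfl⟩ := Finset.mem_image.mp ht
          exact h12 _ he z hz j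
      have := count_lt (ρ (s(v, w), 1)) hlt
      rwa [hTcard] at this
    have hE1' : ∀ z ∈ (s(v, w) : Sym2 V), 2 ≤ (ρ (s(v, w), 1) (Sum.inl z) : ℕ) := by
      intro z hz
      have hlt : ∀ t ∈ ({d1, d2} : Finset (V ⊕ Fin 2 ⊕ Fin x)),
          ρ (s(v, w), 1) t < ρ (s(v, w), 1) (Sum.inl z) := by
        intro t ht
        rcases Finset.mem_insert.mp ht with rfl | ht
        · exact lt_trans (hd _ he 1) (h11 _ he z hz)
        · rw [Finset.mem_singleton.mp ht]
          exact h11 _ he z hz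
      have := count_gt (ρ (s(v, w), 1)) hlt
      rwa [Finset.card_insert_of_notMem (by simp [hd1, hd2]), Finset.card_singleton] at this
    -- non-endpoint positions for agent 1
    have hN1 : ∀ z : V, z ∉ (s(v, w) : Sym2 V) →
        x + 4 ≤ (ρ (s(v, w), 1) (Sum.inl z) : ℕ) := by
      intro z hz
      set T : Finset (V ⊕ Fin 2 ⊕ Fin x) :=
        insert d1 (insert d2 (insert (Sum.inl v) (insert (Sum.inl w) Hs))) with hT
      have hTcard : T.card = x + 4 := by
        rw [hT, Finset.card_insert_of_notMem (by simp [hd1, hd2, hHs]),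
          Finset.card_insert_of_notMem (by simp [hd2, hHs]),
          Finset.card_insert_of_notMem (by simp [hHs, hvw]),
          Finset.card_insert_of_notMem (by simp [hHs]), hHscard]
      have hlt : ∀ t ∈ T, ρ (s(v, w), 1) t < ρ (s(v, w), 1) (Sum.inl z) := by
        intro t ht
        rw [hT] at ht
        rcases Finset.mem_insert.mp ht with rfl | ht
        · exact lt_trans (hd _ he 1) (lt_trans (lt_trans (h11 _ he v hvmem)
            (h12 _ he v hvmem h0)) (h13 _ he h0 z hz))
        rcases Finset.mem_insert.mp ht with rfl | ht
        · exact lt_trans (lt_trans (h11 _ he v hvmem) (h12 _ he v hvmem h0))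
            (h13 _ he h0 z hz)
        rcases Finset.mem_insert.mp ht with rfl | ht
        · exact lt_trans (h12 _ he v hvmem h0) (h13 _ he h0 z hz)
        rcases Finset.mem_insert.mp ht with rfl | ht
        · exact lt_trans (h12 _ he w hwmem h0) (h13 _ he h0 z hz)
        · obtain ⟨j, -, rfl⟩ := Finset.mem_image.mp ht
          exact h13 _ he j z hz
      have := count_gt (ρ (s(v, w), 1)) hlt
      rwa [hTcard] at this
    -- assemble
    refine ⟨?_, ?_, ?_, ?_, ?_, ?_⟩
    · intro b
      obtain ⟨hA, hB⟩ := hd1d2 b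
      constructor
      · simp only [hU, hA]
        push_cast
        ring
      · simp only [hU, hB]
        push_cast
        ring
    · intro z hz
      have h1 := hE0 z hz
      have h2 : ((m : ℝ) + x) ≤ ((ρ (s(v, w), 0) (Sum.inl z) : ℕ) : ℝ) := by
        exact_mod_cast h1
      simp only [hU]
      push_cast
      linarith
    · intro z hz
      have h1 := hN0 z hz
      have h2 := hN0' z hz
      have h1' : ((ρ (s(v, w), 0) (Sum.inl z) : ℕ) : ℝ) + 1 ≤ (m : ℝ) := by
        have : (ρ (s(v, w), 0) (Sum.inl z) : ℕ) + 1 ≤ m := by omega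
        exact_mod_cast this
      have h2' : (2 : ℝ) ≤ ((ρ (s(v, w), 0) (Sum.inl z) : ℕ) : ℝ) := by exact_mod_cast h2
      constructor
      · simp only [hU]; push_cast; linarith
      · simp only [hU]; push_cast; linarith
    · intro z hz
      have h1 := hE1 z hz
      have h2 := hE1' z hz
      have h1' : ((ρ (s(v, w), 1) (Sum.inl z) : ℕ) : ℝ) ≤ 3 := by
        have : (ρ (s(v, w), 1) (Sum.inl z) : ℕ) ≤ 3 := by omega
        exact_mod_cast this
      have h2' : (2 : ℝ) ≤ ((ρ (s(v, w), 1) (Sum.inl z) : ℕ) : ℝ) := by exact_mod_cast h2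
      constructor
      · simp only [hU]; push_cast; linarith
      · simp only [hU]; push_cast; linarith
    · intro z hz
      have h1 := hN1 z hz
      have h1' : ((x : ℝ) + 4) ≤ ((ρ (s(v, w), 1) (Sum.inl z) : ℕ) : ℝ) := by exact_mod_cast h1
      simp only [hU]
      push_cast
      linarith
    · intro T
      have hsub : T.filter (fun z => z ∈ (s(v, w) : Sym2 V)) ⊆ {v, w} := by
        intro z hz
        rcases Sym2.mem_iff.mp (Finset.mem_filter.mp hz).2 with rfl | rfl <;> simp
      exact (Finset.card_le_card hsub).trans hcard2
  -- basic facts about `W S := {d1, d2} ∪ inl '' S`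
  have hWcard : ∀ S : Finset V, S.card = K →
      (insert d1 (insert d2 (S.image (Sum.inl : V → V ⊕ Fin 2 ⊕ Fin x)))).card = K + 2 := by
    intro S hS
    rw [Finset.card_insert_of_notMem (by simp [hd1, hd2]),
      Finset.card_insert_of_notMem (by simp [hd2]),
      Finset.card_image_of_injective _ Sum.inl_injective, hS]
  constructor
  · rintro ⟨C, hCcard, hCcov⟩
    obtain ⟨S, hCS, hScard⟩ := Finset.exists_superset_card_eq hCcard
      (by rw [hm]; exact hKm)
    refine ⟨insert d1 (insert d2 (S.image (Sum.inl : V → V ⊕ Fin 2 ⊕ Fin x))), Finset.mem_insert_self _ _,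
      Finset.mem_insert_of_mem (Finset.mem_insert_self _ _), ?_, hWcard S hScard, ?_⟩
    · intro j
      simp [hd1, hd2]
    · rw [howa]
      have hlow : ∀ e ∈ G.edgeFinset, (x : ℝ) * ((K : ℝ) + 4) ≤
          inAgent (U (e, 0)) K (insert d1 (insert d2 (S.image (Sum.inl : V → V ⊕ Fin 2 ⊕ Fin x)))) + inAgent (U (e, 1)) K (insert d1 (insert d2 (S.image (Sum.inl : V → V ⊕ Fin 2 ⊕ Fin x)))) := by
        intro e he
        obtain ⟨f1, f2, f3, f4, f5, f6⟩ := edge_facts e he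
        refine pair_low m x K hK hm3 d1 d2 Sum.inl Sum.inl_injective
          (by simp [hd1, hd2]) (by simp [hd1]) (by simp [hd2])
          (U (e, 0)) (U (e, 1)) (fun z => z ∈ e)
          (fun a => hU0 _ a) (fun a => hU0 _ a)
          (f1 0).1 (f1 0).2 (f1 1).1 (f1 1).2 f2 f3 f4 f5 f6 S hScard ?_
        obtain ⟨v, hvC, hve⟩ := hCcov e he
        exact ⟨v, hCS hvC, hve⟩
      have hlb := Finset.card_nsmul_le_sum G.edgeFinset _ _ hlow
      rw [hn, nsmul_eq_mul] at hlb
      calc (n : ℝ) * x * ((K : ℝ) + 4) = (n : ℝ) * ((x : ℝ) * ((K : ℝ) + 4)) := by ring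
        _ ≤ _ := hlb
  · rintro ⟨W0, hW1, hW2, hWH, hWc, hTot⟩
    set S : Finset V := Finset.univ.filter (fun z => (Sum.inl z : V ⊕ Fin 2 ⊕ Fin x) ∈ W0)
      with hSdef
    have hW0eq : W0 = insert d1 (insert d2 (S.image (Sum.inl : V → V ⊕ Fin 2 ⊕ Fin x))) := by
      ext a
      rcases a with z | b | j
      · simp [hSdef, hd1, hd2]
      · fin_cases b
        · simpa [hd1, hd2] using hW1
        · simpa [hd1, hd2] using hW2
      · simp [hd1, hd2, hWH j]
    have hScard : S.card = K := by
      rw [hW0eq, Finset.card_insert_of_notMem (by simp [hd1, hd2]),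
        Finset.card_insert_of_notMem (by simp [hd2]),
        Finset.card_image_of_injective _ Sum.inl_injective] at hWc
      omega
    refine ⟨S, le_of_eq hScard, ?_⟩
    by_contra hcov
    push_neg at hcov
    obtain ⟨e0, he0, hunc⟩ := hcov
    have hn1 : 1 ≤ n := by rw [← hn]; exact Finset.card_pos.mpr ⟨_, he0⟩
    rw [hW0eq, howa] at hTot
    have hrest : ∑ e ∈ G.edgeFinset.erase e0,
        (inAgent (U (e, 0)) K (insert d1 (insert d2 (S.image (Sum.inl : V → V ⊕ Fin 2 ⊕ Fin x)))) + inAgent (U (e, 1)) K (insert d1 (insert d2 (S.image (Sum.inl : V → V ⊕ Fin 2 ⊕ Fin x))))) ≤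
        ((n - 1 : ℕ) : ℝ) * ((x : ℝ) * ((K : ℝ) + 4) + (2 * K * m + 4 * m + 6)) := by
      have hub := Finset.sum_le_card_nsmul (G.edgeFinset.erase e0)
        (fun e => inAgent (U (e, 0)) K (insert d1 (insert d2 (S.image (Sum.inl : V → V ⊕ Fin 2 ⊕ Fin x)))) + inAgent (U (e, 1)) K (insert d1 (insert d2 (S.image (Sum.inl : V → V ⊕ Fin 2 ⊕ Fin x)))))
        ((x : ℝ) * ((K : ℝ) + 4) + (2 * K * m + 4 * m + 6))
        (fun e he => by
          obtain ⟨f1, f2, f3, f4, f5, f6⟩ := edge_facts e (Finset.mem_of_mem_erase he)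
          exact pair_up m x K hK hm3 d1 d2 Sum.inl Sum.inl_injective
            (by simp [hd1, hd2]) (by simp [hd1]) (by simp [hd2])
            (U (e, 0)) (U (e, 1)) (fun z => z ∈ e)
            (fun a => hU0 _ a) (fun a => hU0 _ a)
            (f1 0).1 (f1 0).2 (f1 1).1 (f1 1).2 f2 f3 f4 f5 f6 S hScard)
      rwa [Finset.card_erase_of_mem he0, hn, nsmul_eq_mul] at hub
    have hpair0 : inAgent (U (e0, 0)) K
          (insert d1 (insert d2 (S.image (Sum.inl : V → V ⊕ Fin 2 ⊕ Fin x)))) +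
        inAgent (U (e0, 1)) K
          (insert d1 (insert d2 (S.image (Sum.inl : V → V ⊕ Fin 2 ⊕ Fin x)))) ≤
        (x : ℝ) * ((K : ℝ) + 4) + (2 * K * m + 4 * m + 6) - x := by
      obtain ⟨f1, f2, f3, f4, f5, f6⟩ := edge_facts e0 he0
      exact pair_unc m x K hK hm3 d1 d2 Sum.inl Sum.inl_injective
          (by simp [hd1, hd2]) (by simp [hd1]) (by simp [hd2])
          (U (e0, 0)) (U (e0, 1)) (fun z => z ∈ e0)
          (fun a => hU0 _ a) (fun a => hU0 _ a)
          (f1 0).1 (f1 0).2 (f1 1).1 (f1 1).2 f2 f3 f4 f5 f6 S hScard hunc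
    have hsum := Finset.add_sum_erase G.edgeFinset
      (fun e => inAgent (U (e, 0)) K (insert d1 (insert d2 (S.image (Sum.inl : V → V ⊕ Fin 2 ⊕ Fin x)))) + inAgent (U (e, 1)) K (insert d1 (insert d2 (S.image (Sum.inl : V → V ⊕ Fin 2 ⊕ Fin x))))) he0
    have htot2 : (n : ℝ) * x * ((K : ℝ) + 4) ≤
        ((x : ℝ) * ((K : ℝ) + 4) + (2 * K * m + 4 * m + 6) - x) +
        ((n - 1 : ℕ) : ℝ) * ((x : ℝ) * ((K : ℝ) + 4) + (2 * K * m + 4 * m + 6)) := by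
      calc (n : ℝ) * x * ((K : ℝ) + 4) ≤ _ := hTot
        _ = _ := hsum.symm
        _ ≤ _ := add_le_add hpair0 hrest
    have hc1 : ((n - 1 : ℕ) : ℝ) = (n : ℝ) - 1 := by
      rw [Nat.cast_sub hn1]; norm_num
    have hnr : (1 : ℝ) ≤ (n : ℝ) := by exact_mod_cast hn1
    have hKr : (3 : ℝ) ≤ (K : ℝ) := by exact_mod_cast hK
    have hmr : (3 : ℝ) ≤ (m : ℝ) := by exact_mod_cast hm3
    have hxkey : (n : ℝ) * (2 * K * m + 4 * m + 6) < (x : ℝ) := by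
      have hxr : (x : ℝ) = 4 * n * ((m : ℝ) + 2) * ((K : ℝ) + 4) := by rw [hx]; push_cast; ring
      have hid : 4 * (n : ℝ) * ((m : ℝ) + 2) * ((K : ℝ) + 4) =
          (n : ℝ) * (2 * K * m + 4 * m + 6) + (n : ℝ) * (2 * K * m + 12 * m + 8 * K + 26) := by
        ring
      have hpos : (1 : ℝ) * (2 * (K : ℝ) * m + 12 * m + 8 * K + 26) ≤
          (n : ℝ) * (2 * (K : ℝ) * m + 12 * m + 8 * K + 26) :=
        mul_le_mul_of_nonneg_right hnr (by positivity)
      have hKm0 : (0 : ℝ) ≤ (K : ℝ) * m :=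
        mul_nonneg (by linarith) (by linarith)
      rw [hxr, hid]
      linarith [hpos, hKm0]
    rw [hc1] at htot2
    have hfin : ((x : ℝ) * ((K : ℝ) + 4) + (2 * K * m + 4 * m + 6) - x) +
        ((n : ℝ) - 1) * ((x : ℝ) * ((K : ℝ) + 4) + (2 * K * m + 4 * m + 6)) =
        (n : ℝ) * x * ((K : ℝ) + 4) + ((n : ℝ) * (2 * K * m + 4 * m + 6) - x) := by
      ring
    rw [hfin] at htot2
    linarith
end
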